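/- Every point of S = {(x, f(x)) : x ∈ K} lies in the zone Z_f; that is, for every x ∈ K and y = f(x): x̲_j ≤ x_j ≤ x̄_j for all j; m_i ≤ y_i ≤ M_i for all i; y_{i₁} − y_{i₂} ≤ Δ_{i₁,i₂} for all i₁,i₂; and m_i − x̄_j + δ_{i,j} ≤ y_i − x_j ≤ M_i − x̲_j − δ_{i,j} for all i,j. -/

import Mathlib

theorem graph_subset_zone (m n : ℕ) (hm : 1 ≤ m) (hn : 1 ≤ n)
    (w : Fin n → Fin m → ℝ) (b : Fin n → ℝ)
    (xl xu : Fin m → ℝ) (hbounds : ∀ j, xl j ≤ xu j)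
    (mlow Mup : Fin n → ℝ)
    (hmlow : ∀ i, mlow i = b i + ∑ j, w i j * (if w i j < 0 then xu j else xl j))
    (hMup : ∀ i, Mup i = b i + ∑ j, w i j * (if w i j < 0 then xl j else xu j))
    (Delta : Fin n → Fin n → ℝ) (delta : Fin n → Fin m → ℝ)
    (hDelta : ∀ i₁ i₂, Delta i₁ i₂ = (b i₁ - b i₂) +
        ∑ j, (w i₁ j - w i₂ j) * (if w i₁ j < w i₂ j then xl j else xu j))
    (hdelta : ∀ i j, delta i j = if w i j ≤ 0 then 0
        else if w i j ≤ 1 then w i j * (xu j - xl j) else xu j - xl j) :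
    ∀ x : Fin m → ℝ, (∀ j, xl j ≤ x j ∧ x j ≤ xu j) →
    ∀ y : Fin n → ℝ, (∀ i, y i = ∑ j, w i j * x j + b i) →
      ((∀ j, xl j ≤ x j ∧ x j ≤ xu j) ∧
        (∀ i, mlow i ≤ y i ∧ y i ≤ Mup i) ∧
        (∀ i₁ i₂, y i₁ - y i₂ ≤ Delta i₁ i₂) ∧
        (∀ i j, mlow i - xu j + delta i j ≤ y i - x j ∧
          y i - x j ≤ Mup i - xl j - delta i j)) := by
  intro x hx y hy
  have hterm : ∀ i j, w i j * (if w i j < 0 then xu j else xl j) ≤ w i j * x j ∧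
      w i j * x j ≤ w i j * (if w i j < 0 then xl j else xu j) := by
    intro i j
    rcases lt_or_ge (w i j) 0 with h | h
    · simp only [if_pos h]
      constructor <;> nlinarith [(hx j).1, (hx j).2]
    · simp only [if_neg (not_lt.2 h)]
      constructor <;> nlinarith [(hx j).1, (hx j).2]
  refine ⟨hx, ?_, ?_, ?_⟩
  · intro i
    rw [hmlow, hMup, hy]
    have h1 := Finset.sum_le_sum (fun j (_ : j ∈ Finset.univ) => (hterm i j).1)
    have h2 := Finset.sum_le_sum (fun j (_ : j ∈ Finset.univ) => (hterm i j).2)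
    constructor <;> linarith
  · intro i₁ i₂
    rw [hDelta, hy i₁, hy i₂]
    have h1 : ∀ j ∈ Finset.univ, (w i₁ j - w i₂ j) * x j ≤
        (w i₁ j - w i₂ j) * (if w i₁ j < w i₂ j then xl j else xu j) := by
      intro j _
      rcases lt_or_ge (w i₁ j) (w i₂ j) with h | h
      · simp only [if_pos h]
        nlinarith [(hx j).1, (hx j).2]
      · simp only [if_neg (not_lt.2 h)]
        nlinarith [(hx j).1, (hx j).2]
    have h2 := Finset.sum_le_sum h1
    have e : ∑ j, (w i₁ j - w i₂ j) * x j =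
        ∑ j, w i₁ j * x j - ∑ j, w i₂ j * x j := by
      rw [← Finset.sum_sub_distrib]
      exact Finset.sum_congr rfl fun j _ => by ring
    linarith
  · intro i j
    have hsplit : ∀ (g : Fin m → ℝ),
        ∑ k ∈ Finset.univ.erase j, g k + g j = ∑ k, g k :=
      fun g => Finset.sum_erase_add _ _ (Finset.mem_univ j)
    have hs1 := Finset.sum_le_sum
      (fun k (_ : k ∈ Finset.univ.erase j) => (hterm i k).1)
    have hs2 := Finset.sum_le_sum
      (fun k (_ : k ∈ Finset.univ.erase j) => (hterm i k).2)
    have keylow : w i j * (if w i j < 0 then xu j else xl j) - xu j + delta i j ≤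
        w i j * x j - x j := by
      rw [hdelta]
      rcases lt_trichotomy (w i j) 0 with h | h | h
      · simp only [if_pos h, if_pos h.le]
        nlinarith [(hx j).1, (hx j).2]
      · simp [h, (hx j).2]
      · rcases le_or_gt (w i j) 1 with h1 | h1
        · simp only [if_neg (not_lt.2 h.le), if_neg (not_le.2 h), if_pos h1]
          nlinarith [(hx j).1, (hx j).2]
        · simp only [if_neg (not_lt.2 h.le), if_neg (not_le.2 h),
            if_neg (not_le.2 h1)]
          nlinarith [(hx j).1, (hx j).2]
    have keyup : w i j * x j - x j ≤
        w i j * (if w i j < 0 then xl j else xu j) - xl j - delta i j := by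
      rw [hdelta]
      rcases lt_trichotomy (w i j) 0 with h | h | h
      · simp only [if_pos h, if_pos h.le]
        nlinarith [(hx j).1, (hx j).2]
      · simp [h, (hx j).1]
      · rcases le_or_gt (w i j) 1 with h1 | h1
        · simp only [if_neg (not_lt.2 h.le), if_neg (not_le.2 h), if_pos h1]
          nlinarith [(hx j).1, (hx j).2]
        · simp only [if_neg (not_lt.2 h.le), if_neg (not_le.2 h),
            if_neg (not_le.2 h1)]
          nlinarith [(hx j).1, (hx j).2]
    rw [hmlow, hMup, hy]
    constructor
    · have e1 := hsplit (fun k => w i k * x k)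
      have e2 := hsplit (fun k => w i k * (if w i k < 0 then xu k else xl k))
      linarith
    · have e1 := hsplit (fun k => w i k * x k)
      have e2 := hsplit (fun k => w i k * (if w i k < 0 then xl k else xu k))
      linarith
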